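/- Let X be a real normed space, C ⊆ X a nontrivial convex cone, B a bounded base of C, and 0 < ε < min{1, δ_B}. Then the following are equivalent: (i) the pair (C, C_{(B,ε)}) has the strict separation property; (ii) there exist δ₂ > δ₁ > 0 and f ∈ X* such that for every α ∈ (δ₁, δ₂): (f,α) ∈ C^{a#}_+, −C \ {0} ⊆ int(S(f,α)) = {x ∈ X : f(x) + α‖x‖ < 0} ⊆ −C_{(B,ε)}, and f(x) + α‖x‖ > 0 whenever x ∈ X \ int(−C_{(B,ε)}) and x ≠ 0. -/

import Mathlib

open Set Metric Pointwise

namespace HenigPaper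

variable {X : Type*} [NormedAddCommGroup X] [NormedSpace ℝ X]

/-- `C` is a cone: closed under multiplication by nonnegative scalars. -/
def IsCone (C : Set X) : Prop :=
  ∀ ⦃l : ℝ⦄, 0 ≤ l → ∀ ⦃x⦄, x ∈ C → l • x ∈ C

/-- `C` is a nontrivial cone: `{0} ⊊ C ⊊ X`. -/
def NontrivialCone (C : Set X) : Prop :=
  IsCone C ∧ ({(0 : X)} : Set X) ⊂ C ∧ C ≠ Set.univ

/-- A cone is pointed if `(-C) ∩ C = {0}`. -/
def PointedCone' (C : Set X) : Prop := (-C) ∩ C = ({(0 : X)} : Set X)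

/-- Convexity of a cone in the sense `C + C = C`. -/
def ConeConvex (C : Set X) : Prop := C + C = C

/-- The strict separation property (SSP) for the pair of cones `(C, K)`. -/
def SSP (C K : Set X) : Prop :=
  (0 : X) ∉ closure (convexHull ℝ (C ∩ sphere (0 : X) 1) -
    convexHull ℝ ((frontier K ∩ sphere (0 : X) 1) ∪ {(0 : X)}))

/-- The Bishop–Phelps cone `C(f, α) = {x : f x ≥ α ‖x‖}`. -/
def BPCone (f : X →L[ℝ] ℝ) (α : ℝ) : Set X := {x : X | α * ‖x‖ ≤ f x}

/-- The sublevel set `S(f, α) = {x : f x + α ‖x‖ ≤ 0}`. -/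
def Ssub (f : X →L[ℝ] ℝ) (α : ℝ) : Set X := {x : X | f x + α * ‖x‖ ≤ 0}

/-- `f ∈ C^#`: strictly positive functionals on `C`. -/
def StrictlyPos (C : Set X) (f : X →L[ℝ] ℝ) : Prop :=
  ∀ x ∈ C, x ≠ 0 → 0 < f x

/-- `(f, α) ∈ C^{a*}`: the augmented dual cone. -/
def MemAugDual (C : Set X) (f : X →L[ℝ] ℝ) (α : ℝ) : Prop :=
  StrictlyPos C f ∧ 0 ≤ α ∧ ∀ x ∈ C, α * ‖x‖ ≤ f x

/-- `(f, α) ∈ C^{a#}_+`. -/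
def MemAugDualSharpPlus (C : Set X) (f : X →L[ℝ] ℝ) (α : ℝ) : Prop :=
  StrictlyPos C f ∧ 0 < α ∧ ∀ x ∈ C, x ≠ 0 → α * ‖x‖ < f x

/-- `B` is a base for the cone `C`. -/
def IsBase (C B : Set X) : Prop :=
  B.Nonempty ∧ Convex ℝ B ∧ B ⊆ C ∧ (0 : X) ∉ closure B ∧
    ∀ x ∈ C, x ≠ (0 : X) → ∃! p : ℝ × X, 0 < p.1 ∧ p.2 ∈ B ∧ x = p.1 • p.2

/-- The cone `C` has a bounded base. -/
def HasBoundedBase (C : Set X) : Prop :=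
  ∃ B : Set X, IsBase C B ∧ Bornology.IsBounded B

/-- The cone generated by a set `A`. -/
def coneGen (A : Set X) : Set X := {y : X | ∃ l : ℝ, 0 ≤ l ∧ ∃ a ∈ A, y = l • a}

/-- The `ε`-conic neighbourhood `C_ε` of a cone `C`. -/
def epsCone (C : Set X) (ε : ℝ) : Set X :=
  coneGen {x : X | infDist x (C ∩ sphere (0 : X) 1) ≤ ε}

/-- `δ_B = inf {‖b‖ : b ∈ B}`. -/
noncomputable def deltaB (B : Set X) : ℝ := sInf ((fun b => ‖b‖) '' B)

/-- The Henig dilating cone `C_{(B,ε)}`. -/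
def henigCone (B : Set X) (ε : ℝ) : Set X :=
  coneGen {x : X | infDist x B ≤ ε}

/-- The set of efficient (Pareto minimal) points of `A` with respect to the cone `C`. -/
def MinSet (A C : Set X) : Set X :=
  {x ∈ A | (A - ({x} : Set X)) ∩ (-C) = ({(0 : X)} : Set X)}

/-- The set of Henig global proper efficient points of `A` with respect to `C`. -/
def GHe (A C : Set X) : Set X :=
  {x : X | ∃ K : Set X, IsCone K ∧ ConeConvex K ∧ C \ {(0 : X)} ⊆ interior K ∧
    x ∈ MinSet A K}

/-- A subset of `X` is weakly compact if it is compact in the weak topology. -/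
def WeaklyCompact (A : Set X) : Prop :=
  IsCompact ((toWeakSpace ℝ X) '' A)

end HenigPaper

open HenigPaper

variable {X : Type*} [NormedAddCommGroup X] [NormedSpace ℝ X]



section AuxLemmas

variable {X : Type*} [NormedAddCommGroup X] [NormedSpace ℝ X]

lemma aux_isCone_henig (B : Set X) (ε : ℝ) : IsCone (henigCone B ε) := by
  rintro l hl y ⟨m, hm, a, ha, rfl⟩
  exact ⟨l * m, mul_nonneg hl hm, a, ha, smul_smul l m a⟩

lemma aux_smul_mem_interior {K : Set X} (hK : IsCone K) {x : X} (hx : x ∈ interior K)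
    {l : ℝ} (hl : 0 < l) : l • x ∈ interior K := by
  have hsub : l • interior K ⊆ interior K := by
    apply interior_maximal
    · rintro _ ⟨y, hy, rfl⟩; exact hK hl.le (interior_subset hy)
    · exact isOpenMap_smul₀ (ne_of_gt hl) _ isOpen_interior
  exact hsub ⟨x, hx, rfl⟩

lemma aux_smul_mem_closure {K : Set X} (hK : IsCone K) {x : X} (hx : x ∈ closure K)
    {l : ℝ} (hl : 0 ≤ l) : l • x ∈ closure K :=
  map_mem_closure (continuous_const_smul l) hx (fun _ hy => hK hl hy)

lemma aux_interior_neg (s : Set X) : interior (-s) = -interior s := by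
  have key : ∀ t : Set X, -interior t ⊆ interior (-t) := fun t =>
    interior_maximal (Set.neg_subset_neg.2 interior_subset) isOpen_interior.neg
  refine Set.Subset.antisymm ?_ (key s)
  have h2 := key (-s)
  rw [neg_neg] at h2
  intro x hx
  rw [Set.mem_neg]
  exact h2 (by rwa [Set.mem_neg, neg_neg])

lemma aux_mem_int_henig {C B : Set X} (hB : IsBase C B) {ε : ℝ} (hε : 0 < ε)
    {x : X} (hx : x ∈ C) (hx0 : x ≠ 0) : x ∈ interior (henigCone B ε) := by
  obtain ⟨_, _, _, _, hbase⟩ := hB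
  obtain ⟨⟨l, b⟩, ⟨hl, hb, hxe⟩, -⟩ := hbase x hx hx0
  have hball : ball b ε ⊆ henigCone B ε := by
    intro w hw
    refine ⟨1, zero_le_one, w, ?_, (one_smul ℝ w).symm⟩
    have : infDist w B ≤ dist w b := infDist_le_dist_of_mem hb
    exact le_trans this (le_of_lt hw)
  have hbint : b ∈ interior (henigCone B ε) :=
    mem_interior.2 ⟨ball b ε, hball, isOpen_ball, mem_ball_self hε⟩
  rw [hxe]
  exact aux_smul_mem_interior (aux_isCone_henig B ε) hbint hl

lemma aux_interior_Ssub (f : X →L[ℝ] ℝ) {α : ℝ} (hα : 0 < α) {p : X}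
    (hp : f p + α * ‖p‖ < 0) :
    interior (Ssub f α) = {x : X | f x + α * ‖x‖ < 0} := by
  apply Set.Subset.antisymm
  · intro x hx
    obtain ⟨ρ, hρ, hball⟩ := Metric.mem_nhds_iff.1 (mem_interior_iff_mem_nhds.1 hx)
    set s : ℝ := ρ / (2 * (‖x - p‖ + 1)) with hs_def
    have hden : (0:ℝ) < 2 * (‖x - p‖ + 1) := by positivity
    have hs0 : 0 < s := by positivity
    set q : X := x + s • (x - p) with hq_def
    have hqS : q ∈ Ssub f α := by
      apply hball
      rw [Metric.mem_ball, dist_eq_norm]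
      have h1 : q - x = s • (x - p) := by rw [hq_def]; abel
      rw [h1, norm_smul, Real.norm_eq_abs, abs_of_pos hs0]
      rw [hs_def, div_mul_eq_mul_div, div_lt_iff₀ hden]
      nlinarith [norm_nonneg (x - p)]
    have h1s : (0:ℝ) < 1 + s := by linarith
    set a : ℝ := (1 + s)⁻¹ with ha_def
    have ha : 0 < a := inv_pos.2 h1s
    have hx_eq : x = a • q + (s * a) • p := by
      rw [hq_def, ha_def]
      match_scalars <;> field_simp <;> ring
    have hfx : f x = a * f q + (s * a) * f p := by
      rw [hx_eq]; simp [map_add, map_smul, smul_eq_mul]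
    have hnx : ‖x‖ ≤ a * ‖q‖ + (s * a) * ‖p‖ := by
      calc ‖x‖ = ‖a • q + (s * a) • p‖ := by rw [← hx_eq]
        _ ≤ ‖a • q‖ + ‖(s * a) • p‖ := norm_add_le _ _
        _ = a * ‖q‖ + (s * a) * ‖p‖ := by
            rw [norm_smul, norm_smul, Real.norm_eq_abs, Real.norm_eq_abs,
              abs_of_pos ha, abs_of_pos (mul_pos hs0 ha)]
    have hq' : f q + α * ‖q‖ ≤ 0 := by exact hqS
    have h3 : a * (f q + α * ‖q‖) ≤ 0 := mul_nonpos_of_nonneg_of_nonpos ha.le hq'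
    have h4 : (s * a) * (f p + α * ‖p‖) < 0 := mul_neg_of_pos_of_neg (mul_pos hs0 ha) hp
    have h5 : α * ‖x‖ ≤ α * (a * ‖q‖ + (s * a) * ‖p‖) :=
      mul_le_mul_of_nonneg_left hnx hα.le
    show f x + α * ‖x‖ < 0
    nlinarith [h3, h4, h5, hfx]
  · apply interior_maximal
    · intro x hx
      show f x + α * ‖x‖ ≤ 0
      exact le_of_lt hx
    · exact isOpen_lt (f.continuous.add (continuous_const.mul continuous_norm)) continuous_const

end AuxLemmas

/-- Characterization of the SSP for the pair `(C, C_{(B,ε)})`. -/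
theorem stmt10 (C B : Set X) (hC : NontrivialCone C) (hconv : ConeConvex C)
    (hB : IsBase C B) (hBb : Bornology.IsBounded B)
    (ε : ℝ) (h0 : 0 < ε) (h1 : ε < 1) (h2 : ε < deltaB B) :
    SSP C (henigCone B ε) ↔
      ∃ δ₁ δ₂ : ℝ, 0 < δ₁ ∧ δ₁ < δ₂ ∧ ∃ f : X →L[ℝ] ℝ,
        ∀ α ∈ Set.Ioo δ₁ δ₂,
          MemAugDualSharpPlus C f α ∧
          (-C) \ {(0 : X)} ⊆ interior (Ssub f α) ∧
          interior (Ssub f α) = {x : X | f x + α * ‖x‖ < 0} ∧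
          interior (Ssub f α) ⊆ -(henigCone B ε) ∧
          ∀ x : X, x ∉ interior (-(henigCone B ε)) → x ≠ 0 → 0 < f x + α * ‖x‖ := by
  obtain ⟨hcone, hne, -⟩ := hC
  obtain ⟨z, hzC, hz0⟩ : ∃ z, z ∈ C ∧ z ≠ 0 := by
    obtain ⟨z, hz1, hz2⟩ := Set.exists_of_ssubset hne
    exact ⟨z, hz1, by simpa using hz2⟩
  set K := henigCone B ε with hK_def
  have hKcone : IsCone K := aux_isCone_henig B ε
  have hCint : ∀ x ∈ C, x ≠ 0 → x ∈ interior K := fun x hx hx0 => aux_mem_int_henig hB h0 hx hx0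
  set c : X := ‖z‖⁻¹ • z with hc_def
  have hz_norm : (0:ℝ) < ‖z‖ := norm_pos_iff.2 hz0
  have hcC : c ∈ C := hcone (inv_nonneg.2 hz_norm.le) hzC
  have hc_norm : ‖c‖ = 1 := by
    rw [hc_def, norm_smul, Real.norm_eq_abs, abs_of_pos (inv_pos.2 hz_norm),
      inv_mul_cancel₀ (ne_of_gt hz_norm)]
  have hc0 : c ≠ 0 := by intro h; rw [h, norm_zero] at hc_norm; norm_num at hc_norm
  have hcS : c ∈ C ∩ sphere (0:X) 1 := ⟨hcC, by simpa [mem_sphere_iff_norm] using hc_norm⟩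
  constructor
  · -- forward direction
    intro hssp
    set E : Set X := (frontier K ∩ sphere (0:X) 1) ∪ {(0:X)} with hE_def
    set D : Set X := convexHull ℝ (C ∩ sphere (0:X) 1) - convexHull ℝ E with hD_def
    have hDconv : Convex ℝ (closure D) :=
      ((convex_convexHull ℝ _).sub (convex_convexHull ℝ _)).closure
    obtain ⟨f, u, hfu0, hfu⟩ := geometric_hahn_banach_point_closed hDconv isClosed_closure hssp
    have hu : 0 < u := by simpa using hfu0
    have h0E : (0:X) ∈ convexHull ℝ E := subset_convexHull ℝ E (Or.inr rfl)
    have hDlt : ∀ x ∈ C ∩ sphere (0:X) 1, ∀ y ∈ convexHull ℝ E, u < f x - f y := by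
      intro x hx y hy
      have hmem : x - y ∈ D := Set.sub_mem_sub (subset_convexHull ℝ _ hx) hy
      have := hfu _ (subset_closure hmem)
      simpa [map_sub] using this
    have hfS1 : ∀ x ∈ C ∩ sphere (0:X) 1, u < f x := by
      intro x hx
      have := hDlt x hx 0 h0E
      simpa using this
    set i : ℝ := sInf (f '' (C ∩ sphere (0:X) 1)) with hi_def
    have hS1ne : (f '' (C ∩ sphere (0:X) 1)).Nonempty := ⟨f c, Set.mem_image_of_mem f hcS⟩
    have hbdd : BddBelow (f '' (C ∩ sphere (0:X) 1)) := by
      refine ⟨u, ?_⟩; rintro _ ⟨x, hx, rfl⟩; exact (hfS1 x hx).le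
    have hui : u ≤ i := le_csInf hS1ne (by rintro _ ⟨x, hx, rfl⟩; exact (hfS1 x hx).le)
    have hfi : ∀ x ∈ C ∩ sphere (0:X) 1, i ≤ f x := fun x hx =>
      csInf_le hbdd (Set.mem_image_of_mem f hx)
    have hfC : ∀ x ∈ C, x ≠ 0 → i * ‖x‖ ≤ f x := by
      intro x hx hx0
      have hn : (0:ℝ) < ‖x‖ := norm_pos_iff.2 hx0
      have hmem : ‖x‖⁻¹ • x ∈ C ∩ sphere (0:X) 1 := by
        refine ⟨hcone (inv_nonneg.2 hn.le) hx, ?_⟩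
        simp [mem_sphere_iff_norm, norm_smul, abs_of_pos (inv_pos.2 hn),
          inv_mul_cancel₀ (ne_of_gt hn)]
      have h1 := hfi _ hmem
      rw [map_smul, smul_eq_mul] at h1
      have h2 := mul_le_mul_of_nonneg_right h1 hn.le
      rwa [mul_comm (‖x‖⁻¹) (f x), mul_assoc, inv_mul_cancel₀ (ne_of_gt hn), mul_one] at h2
    have hcint : c ∈ interior K := hCint c hcC hc0
    have hfc' : i ≤ f c := hfi c hcS
    have key : ∀ y : X, ‖y‖ = 1 → y ∉ interior K → f y ≤ i - u := by
      intro y hy hyK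
      set T : Set ℝ := {s : ℝ | 0 ≤ s ∧ y + s • c ∈ interior K} with hT_def
      have hTne : T.Nonempty := by
        obtain ⟨r, hr, hball⟩ := Metric.isOpen_iff.1 isOpen_interior c hcint
        have h2r : (0:ℝ) < 2 / r := by positivity
        refine ⟨2 / r, h2r.le, ?_⟩
        have heq : y + (2 / r) • c = (2 / r) • ((2 / r)⁻¹ • y + c) := by
          rw [smul_add, smul_inv_smul₀ (ne_of_gt h2r)]
        rw [heq]
        apply aux_smul_mem_interior hKcone _ h2r
        apply hball
        rw [Metric.mem_ball, dist_eq_norm, add_sub_cancel_right, norm_smul, Real.norm_eq_abs,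
          abs_of_pos (inv_pos.2 h2r), hy, mul_one, inv_div]
        linarith
      have hTbdd : BddBelow T := ⟨0, fun s hs => hs.1⟩
      set s₀ : ℝ := sInf T with hs0_def
      have hs0_nonneg : 0 ≤ s₀ := le_csInf hTne fun s hs => hs.1
      set w : X := y + s₀ • c with hw_def
      have hwcl : w ∈ closure K := by
        rw [Metric.mem_closure_iff]
        intro δ hδ
        obtain ⟨s, hsT, hs_lt⟩ := (csInf_lt_iff hTbdd hTne).1
          (show sInf T < s₀ + δ / 2 by rw [← hs0_def]; linarith)
        refine ⟨y + s • c, interior_subset hsT.2, ?_⟩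
        rw [dist_eq_norm]
        have heq : w - (y + s • c) = (s₀ - s) • c := by rw [hw_def]; module
        rw [heq, norm_smul, Real.norm_eq_abs, hc_norm, mul_one]
        have hs_ge : s₀ ≤ s := csInf_le hTbdd hsT
        rw [abs_of_nonpos (by linarith)]
        linarith
      have hwint : w ∉ interior K := by
        rcases eq_or_lt_of_le hs0_nonneg with h | h
        · rw [hw_def, ← h, zero_smul, add_zero]; exact hyK
        · intro hw
          have hφ : Continuous fun s : ℝ => y + s • c :=
            continuous_const.add (continuous_id.smul continuous_const)
          have hopen : IsOpen ((fun s : ℝ => y + s • c) ⁻¹' interior K) :=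
            isOpen_interior.preimage hφ
          obtain ⟨η, hη, hball⟩ := Metric.isOpen_iff.1 hopen s₀ hw
          have h1 : 0 < min η s₀ := lt_min hη h
          have hsT : s₀ - min η s₀ / 2 ∈ T := by
            constructor
            · have := min_le_right η s₀; linarith
            · apply hball
              rw [Metric.mem_ball, Real.dist_eq,
                show s₀ - min η s₀ / 2 - s₀ = -(min η s₀ / 2) by ring, abs_neg,
                abs_of_pos (by linarith)]
              have := min_le_left η s₀
              linarith
          have := csInf_le hTbdd hsT
          rw [← hs0_def] at this
          linarith
      rcases eq_or_ne w 0 with hw0 | hw0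
      · have heq : f y + s₀ * f c = 0 := by
          have h1 := congrArg f hw0
          simpa [hw_def, map_add, map_smul, smul_eq_mul] using h1
        nlinarith [mul_nonneg hs0_nonneg (le_trans (le_trans hu.le hui) hfc')]
      · set v : X := ‖w‖⁻¹ • w with hv_def
        have hw_norm : 0 < ‖w‖ := norm_pos_iff.2 hw0
        have hv_cl : v ∈ closure K := aux_smul_mem_closure hKcone hwcl (inv_nonneg.2 hw_norm.le)
        have hv_int : v ∉ interior K := by
          intro hv
          have h1 := aux_smul_mem_interior hKcone hv hw_norm
          rw [hv_def, smul_inv_smul₀ (ne_of_gt hw_norm)] at h1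
          exact hwint h1
        have hv_norm : ‖v‖ = 1 := by
          rw [hv_def, norm_smul, Real.norm_eq_abs, abs_of_pos (inv_pos.2 hw_norm),
            inv_mul_cancel₀ (ne_of_gt hw_norm)]
        have hvE : v ∈ E := Or.inl ⟨show v ∈ closure K \ interior K from ⟨hv_cl, hv_int⟩,
          by simpa [mem_sphere_iff_norm] using hv_norm⟩
        have hfv : f v ≤ i - u := by
          have hall : ∀ x ∈ C ∩ sphere (0:X) 1, f v + u ≤ f x := by
            intro x hx
            have := hDlt x hx v (subset_convexHull ℝ E hvE)
            linarith
          have h2 : f v + u ≤ i := le_csInf hS1ne (by rintro _ ⟨x, hx, rfl⟩; exact hall x hx)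
          linarith
        have hfw : f w = ‖w‖ * f v := by
          rw [hv_def, map_smul, smul_eq_mul, ← mul_assoc, mul_inv_cancel₀ (ne_of_gt hw_norm),
            one_mul]
        have hfy : f y = f w - s₀ * f c := by
          rw [hw_def]; simp [map_add, map_smul, smul_eq_mul]
        have hwle : ‖w‖ ≤ 1 + s₀ := by
          rw [hw_def]
          calc ‖y + s₀ • c‖ ≤ ‖y‖ + ‖s₀ • c‖ := norm_add_le _ _
            _ = 1 + s₀ := by
                rw [hy, norm_smul, Real.norm_eq_abs, abs_of_nonneg hs0_nonneg, hc_norm, mul_one]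
        nlinarith [mul_le_mul_of_nonneg_left hfv hw_norm.le,
          mul_le_mul_of_nonneg_right hwle (show (0:ℝ) ≤ i - u by linarith),
          mul_le_mul_of_nonneg_left hfc' hs0_nonneg, mul_nonneg hs0_nonneg hu.le]
    -- choose the interval
    refine ⟨i - u / 2, i, by linarith, by linarith, f, ?_⟩
    intro α hα
    obtain ⟨hα1, hα2⟩ := hα
    have hαpos : 0 < α := by linarith
    have hstrict : ∀ x ∈ C, x ≠ 0 → α * ‖x‖ < f x := by
      intro x hx hx0
      have h1 := hfC x hx hx0
      have hn : 0 < ‖x‖ := norm_pos_iff.2 hx0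
      nlinarith
    have hgneg : ∀ x : X, -x ∈ C → -x ≠ 0 → f x + α * ‖x‖ < 0 := by
      intro x hx hx0
      have h1 := hstrict _ hx hx0
      rw [map_neg, norm_neg] at h1
      linarith
    have hint_eq : interior (Ssub f α) = {x : X | f x + α * ‖x‖ < 0} := by
      refine aux_interior_Ssub f hαpos (p := -c) ?_
      exact hgneg (-c) (by rwa [neg_neg]) (by rw [neg_neg]; exact hc0)
    have hE5 : ∀ x : X, x ∉ interior (-K) → x ≠ 0 → 0 < f x + α * ‖x‖ := by
      intro x hx hx0
      have hn : 0 < ‖x‖ := norm_pos_iff.2 hx0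
      set y : X := ‖x‖⁻¹ • (-x) with hy_def
      have hy_norm : ‖y‖ = 1 := by
        rw [hy_def, norm_smul, norm_neg, Real.norm_eq_abs, abs_of_pos (inv_pos.2 hn),
          inv_mul_cancel₀ (ne_of_gt hn)]
      have hy_int : y ∉ interior K := by
        intro hy
        have h1 : ‖x‖ • y ∈ interior K := aux_smul_mem_interior hKcone hy hn
        rw [hy_def, smul_inv_smul₀ (ne_of_gt hn)] at h1
        apply hx
        rw [aux_interior_neg, Set.mem_neg]
        exact h1
      have h1 := key y hy_norm hy_int
      have hfy : f y = ‖x‖⁻¹ * (- f x) := by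
        rw [hy_def, map_smul, smul_eq_mul, map_neg]
      rw [hfy] at h1
      have h3 : ‖x‖⁻¹ * (- f x) < α := lt_of_le_of_lt h1 (by linarith)
      have h4 := mul_lt_mul_of_pos_left h3 hn
      rw [← mul_assoc, mul_inv_cancel₀ (ne_of_gt hn), one_mul] at h4
      nlinarith
    have hD5 : interior (Ssub f α) ⊆ -K := by
      intro x hx
      rw [hint_eq] at hx
      have hx0 : x ≠ 0 := by
        intro h; rw [h] at hx; simp at hx
      by_contra hxK
      have hx_not : x ∉ interior (-K) := fun h => hxK (interior_subset h)
      have := hE5 x hx_not hx0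
      have hx' : f x + α * ‖x‖ < 0 := hx
      linarith
    have hB2 : (-C) \ {(0:X)} ⊆ interior (Ssub f α) := by
      intro x hx
      rw [hint_eq]
      have hx1 : -x ∈ C := Set.mem_neg.1 hx.1
      have hx0 : -x ≠ 0 := neg_ne_zero.2 (by simpa using hx.2)
      exact hgneg x hx1 hx0
    refine ⟨⟨fun x hx hx0 => lt_trans (mul_pos hαpos (norm_pos_iff.2 hx0)) (hstrict x hx hx0),
      hαpos, hstrict⟩, hB2, hint_eq, hD5, hE5⟩
  · -- reverse direction
    rintro ⟨δ₁, δ₂, hδ₁, hδ12, f, hf⟩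
    set α₁ : ℝ := δ₁ + (δ₂ - δ₁) / 3 with hα₁_def
    set α₂ : ℝ := δ₁ + 2 * (δ₂ - δ₁) / 3 with hα₂_def
    have hα₁m : α₁ ∈ Set.Ioo δ₁ δ₂ := ⟨by rw [hα₁_def]; linarith, by rw [hα₁_def]; linarith⟩
    have hα₂m : α₂ ∈ Set.Ioo δ₁ δ₂ := ⟨by rw [hα₂_def]; linarith, by rw [hα₂_def]; linarith⟩
    obtain ⟨hA2, -, -, -, -⟩ := hf α₂ hα₂m
    obtain ⟨-, -, -, -, hE1⟩ := hf α₁ hα₁m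
    have hα₁pos : 0 < α₁ := by rw [hα₁_def]; linarith
    have hCS : ∀ x ∈ C ∩ sphere (0:X) 1, α₂ ≤ f x := by
      intro x hx
      have hx1 : ‖x‖ = 1 := by simpa [mem_sphere_iff_norm] using hx.2
      have hx0 : x ≠ 0 := by intro h; rw [h, norm_zero] at hx1; norm_num at hx1
      have h1 := hA2.2.2 x hx.1 hx0
      rw [hx1, mul_one] at h1
      exact h1.le
    have hES : ∀ y ∈ (frontier K ∩ sphere (0:X) 1) ∪ {(0:X)}, f y ≤ α₁ := by
      rintro y (⟨hyf, hyS⟩ | hy0)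
      · have hy1 : ‖y‖ = 1 := by simpa [mem_sphere_iff_norm] using hyS
        have hy0 : (-y : X) ≠ 0 := neg_ne_zero.2 (by intro h; rw [h, norm_zero] at hy1; norm_num at hy1)
        have hyint : -y ∉ interior (-K) := by
          rw [aux_interior_neg, Set.mem_neg, neg_neg]
          exact hyf.2
        have h1 := hE1 (-y) hyint hy0
        rw [map_neg, norm_neg, hy1, mul_one] at h1
        linarith
      · rw [Set.mem_singleton_iff] at hy0
        rw [hy0, map_zero]
        linarith
    intro hmem
    have hlin : IsLinearMap ℝ (fun x : X => f x) := ⟨f.map_add, f.map_smul⟩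
    have hhull1 : convexHull ℝ (C ∩ sphere (0:X) 1) ⊆ {x : X | α₂ ≤ f x} :=
      convexHull_min hCS (convex_halfSpace_ge hlin α₂)
    have hhull2 : convexHull ℝ ((frontier K ∩ sphere (0:X) 1) ∪ {(0:X)}) ⊆ {x : X | f x ≤ α₁} :=
      convexHull_min hES (convex_halfSpace_le hlin α₁)
    have hDsub : convexHull ℝ (C ∩ sphere (0:X) 1) -
        convexHull ℝ ((frontier K ∩ sphere (0:X) 1) ∪ {(0:X)}) ⊆ {x : X | α₂ - α₁ ≤ f x} := by
      rintro x hx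
      obtain ⟨a, ha, b, hb, rfl⟩ := Set.mem_sub.1 hx
      have h1 := hhull1 ha
      have h2 := hhull2 hb
      simp only [Set.mem_setOf_eq, map_sub]
      simp only [Set.mem_setOf_eq] at h1 h2
      linarith
    have hclosed : IsClosed {x : X | α₂ - α₁ ≤ f x} :=
      isClosed_le continuous_const f.continuous
    have h0 := (closure_minimal hDsub hclosed) hmem
    simp only [Set.mem_setOf_eq, map_zero] at h0
    rw [hα₁_def, hα₂_def] at h0
    linarith
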